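/- Let G be a finite group and let 𝓐 be a collection of subgroups of G that is closed under conjugation and under intersection of pairs of its members. Let H ≤ G be a subgroup contained in at least one member of 𝓐, and let P denote the set {K ∈ 𝓐 : H ≤ K} partially ordered by inclusion. Then the under category of O_𝓐(G) under G/H (the comma category whose objects are G-maps G/H → G/K with K ∈ 𝓐) is equivalent, as a category, to P viewed as a poset category: every hom-set in the under category has at most one element, each object is isomorphic to one of the canonical projections G/H → G/K with K ∈ P, and there exists a morphism from the projection G/H → G/K to the projection G/H → G/K′ if and only if K ⊆ K′. -/

import Mathlib

open CategoryTheory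

universe u

variable (G : Type u) [Group G]

/-- The orbit category `O_S(G)` attached to a collection `S` of subgroups of `G`:
objects are the subgroups `H ∈ S` (thought of as the coset `G`-sets `G/H` with the
translation action), and morphisms are the `G`-equivariant maps `G/H → G/K`. -/
structure OrbitCat (S : Set (Subgroup G)) where
  /-- The subgroup `H`, representing the `G`-set `G/H`. -/
  pt : Subgroup G
  mem : pt ∈ S

instance {S : Set (Subgroup G)} : Category (OrbitCat G S) where
  Hom A B := { f : G ⧸ A.pt → G ⧸ B.pt // ∀ (g : G) (x : G ⧸ A.pt), f (g • x) = g • f x }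
  id A := ⟨id, fun _ _ => rfl⟩
  comp f g := ⟨g.1 ∘ f.1, fun a x => by simp [Function.comp, f.2, g.2]⟩

/-- The inclusion functor `O_S(G) ⥤ O_T(G)` for `S ⊆ T`. -/
def orbitIncl {S T : Set (Subgroup G)} (h : S ⊆ T) : OrbitCat G S ⥤ OrbitCat G T where
  obj A := ⟨A.pt, h A.mem⟩
  map f := f

/-- The canonical `G`-equivariant projection `G/H → G/K` for `H ≤ K`. -/
def orbitProj {H K : Subgroup G} (h : H ≤ K) :
    { f : G ⧸ H → G ⧸ K // ∀ (g : G) (x : G ⧸ H), f (g • x) = g • f x } :=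
  ⟨Quotient.map' id (fun a b hab => by
      rw [QuotientGroup.leftRel_apply] at hab ⊢
      exact h hab),
   fun g x => Quotient.inductionOn' x (fun a => rfl)⟩

/-- The object of the under category of `O_𝓐(G)` under `G/H` given by the canonical
projection `G/H → G/K`, for `K ∈ 𝓐` with `H ≤ K`. -/
def projObj (𝓐 : Set (Subgroup G)) (H : Subgroup G) {K : Subgroup G}
    (h₁ : K ∈ 𝓐) (h₂ : H ≤ K) :
    StructuredArrow (⟨H, Set.mem_univ H⟩ : OrbitCat G Set.univ)
      (orbitIncl G (Set.subset_univ 𝓐)) :=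
  StructuredArrow.mk
    (show (⟨H, Set.mem_univ H⟩ : OrbitCat G Set.univ) ⟶
        (orbitIncl G (Set.subset_univ 𝓐)).obj ⟨K, h₁⟩ from
      orbitProj G h₂)

section Aux

variable {G} (𝓐 : Set (Subgroup G)) (H : Subgroup G)

/-- The under category in question. -/
abbrev UnderCat :=
  StructuredArrow (⟨H, Set.mem_univ H⟩ : OrbitCat G Set.univ)
    (orbitIncl G (Set.subset_univ 𝓐))

variable {𝓐 H}

lemma mem_stab_iff {K : Subgroup G} (a g : G) :
    g ∈ MulAction.stabilizer G ((a : G) : G ⧸ K) ↔ a⁻¹ * g * a ∈ K := by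
  rw [MulAction.mem_stabilizer_iff]
  show ((g * a : G) : G ⧸ K) = (a : G ⧸ K) ↔ _
  rw [QuotientGroup.eq]
  constructor
  · intro h
    have h' := inv_mem h
    have e : ((g * a)⁻¹ * a)⁻¹ = a⁻¹ * g * a := by group
    rwa [e] at h'
  · intro h
    have h' := inv_mem h
    have e : (a⁻¹ * g * a)⁻¹ = (g * a)⁻¹ * a := by group
    rwa [e] at h'

lemma equivariant_surjective {K K' : Subgroup G} (f : G ⧸ K → G ⧸ K')
    (hf : ∀ (g : G) (x : G ⧸ K), f (g • x) = g • f x) : Function.Surjective f := by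
  intro y
  obtain ⟨b, rfl⟩ := QuotientGroup.mk_surjective y
  set a := (f ((1 : G) : G ⧸ K)).out with ha
  refine ⟨((b * a⁻¹ : G) : G ⧸ K), ?_⟩
  have h1 : f ((1 : G) : G ⧸ K) = ((a : G) : G ⧸ K') := (QuotientGroup.out_eq' _).symm
  have h2 : ((b * a⁻¹ : G) : G ⧸ K) = (b * a⁻¹) • ((1 : G) : G ⧸ K) := by
    show _ = ((b * a⁻¹ * 1 : G) : G ⧸ K); rw [mul_one]
  rw [h2, hf, h1]
  show ((b * a⁻¹ * a : G) : G ⧸ K') = _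
  rw [inv_mul_cancel_right]

instance underHom_subsingleton (A B : UnderCat 𝓐 H) : Subsingleton (A ⟶ B) := by
  constructor
  intro u v
  apply StructuredArrow.hom_ext
  apply Subtype.ext
  funext x
  obtain ⟨y, rfl⟩ := equivariant_surjective A.hom.1 A.hom.2 x
  have hu : u.right.1 (A.hom.1 y) = B.hom.1 y :=
    (congrFun (congrArg Subtype.val u.w) y)
  have hv : v.right.1 (A.hom.1 y) = B.hom.1 y :=
    (congrFun (congrArg Subtype.val v.w) y)
  exact hu.trans hv.symm

lemma w_apply {A B : UnderCat 𝓐 H} (u : A ⟶ B) (y : G ⧸ H) :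
    u.right.1 (A.hom.1 y) = B.hom.1 y :=
  (congrFun (congrArg Subtype.val u.w) y)

/-- The stabilizer of the image of the basepoint. -/
def stabObj (A : UnderCat 𝓐 H) : Subgroup G :=
  MulAction.stabilizer G (A.hom.1 ((1 : G) : G ⧸ H))

lemma hom_one_eq (A : UnderCat 𝓐 H) :
    A.hom.1 ((1 : G) : G ⧸ H) =
      (((A.hom.1 ((1 : G) : G ⧸ H)).out : G) :
          G ⧸ ((orbitIncl G (Set.subset_univ 𝓐)).obj A.right).pt) :=
  (QuotientGroup.out_eq' _).symm

lemma stabObj_mem (h𝓐conj : ∀ K ∈ 𝓐, ∀ g : G, K.map (MulAut.conj g).toMonoidHom ∈ 𝓐)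
    (A : UnderCat 𝓐 H) : stabObj A ∈ 𝓐 := by
  set a := (A.hom.1 ((1 : G) : G ⧸ H)).out with ha
  have h : stabObj A = (A.right.pt).map (MulAut.conj a).toMonoidHom := by
    ext x
    simp only [stabObj]
    rw [hom_one_eq A, ← ha, mem_stab_iff, Subgroup.mem_map_equiv,
      MulAut.conj_symm_apply]
    exact Iff.rfl
  rw [h]
  exact h𝓐conj _ A.right.mem a

lemma le_stabObj (A : UnderCat 𝓐 H) : H ≤ stabObj A := by
  intro h hh
  have h01 : h • ((1 : G) : G ⧸ H) = ((1 : G) : G ⧸ H) := by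
    show ((h * 1 : G) : G ⧸ H) = _
    rw [mul_one, QuotientGroup.eq]
    simpa using inv_mem hh
  show h • A.hom.1 ((1 : G) : G ⧸ H) = A.hom.1 ((1 : G) : G ⧸ H)
  rw [← A.hom.2, h01]

lemma hom_mk_eq (A : UnderCat 𝓐 H) (g : G) :
    A.hom.1 ((g : G) : G ⧸ H) =
      ((g * (A.hom.1 ((1 : G) : G ⧸ H)).out : G) : G ⧸ A.right.pt) := by
  have h1 : ((g : G) : G ⧸ H) = g • ((1 : G) : G ⧸ H) := by
    show _ = ((g * 1 : G) : G ⧸ H); rw [mul_one]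
  rw [h1, A.hom.2]
  conv_lhs => rw [hom_one_eq A]
  rfl

/-- Construction of a morphism in the under category from an inclusion of stabilizers. -/
noncomputable def fullHom (A B : UnderCat 𝓐 H) (hle : stabObj A ≤ stabObj B) : A ⟶ B := by
  set a := (A.hom.1 ((1 : G) : G ⧸ H)).out with ha
  set a' := (B.hom.1 ((1 : G) : G ⧸ H)).out with ha'
  have key : ∀ x y : G, x⁻¹ * y ∈ A.right.pt →
      (x * a⁻¹ * a')⁻¹ * (y * a⁻¹ * a') ∈ B.right.pt := by
    intro x y hxy
    have h1 : a * (x⁻¹ * y) * a⁻¹ ∈ stabObj A := by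
      simp only [stabObj]
      rw [hom_one_eq A, ← ha, mem_stab_iff]
      have e : a⁻¹ * (a * (x⁻¹ * y) * a⁻¹) * a = x⁻¹ * y := by group
      rw [e]
      exact hxy
    have h2 := hle h1
    simp only [stabObj] at h2
    rw [hom_one_eq B, ← ha', mem_stab_iff] at h2
    have e : (x * a⁻¹ * a')⁻¹ * (y * a⁻¹ * a') =
        a'⁻¹ * (a * (x⁻¹ * y) * a⁻¹) * a' := by group
    rw [e]
    exact h2
  let φ : G ⧸ A.right.pt → G ⧸ B.right.pt :=
    Quotient.map' (fun x => x * a⁻¹ * a') (fun x y hxy => by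
      rw [QuotientGroup.leftRel_apply] at hxy ⊢
      exact key x y hxy)
  have hφ : ∀ (g : G) (x : G ⧸ A.right.pt), φ (g • x) = g • φ x := by
    intro g x
    refine Quotient.inductionOn' x (fun z => ?_)
    show ((g * z * a⁻¹ * a' : G) : G ⧸ B.right.pt) =
      ((g * (z * a⁻¹ * a') : G) : G ⧸ B.right.pt)
    rw [show g * z * a⁻¹ * a' = g * (z * a⁻¹ * a') by group]
  refine StructuredArrow.homMk ⟨φ, hφ⟩ ?_
  apply Subtype.ext
  funext x
  refine Quotient.inductionOn' x (fun g => ?_)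
  show φ (A.hom.1 ((g : G) : G ⧸ H)) = B.hom.1 ((g : G) : G ⧸ H)
  rw [hom_mk_eq A, hom_mk_eq B, ← ha, ← ha']
  show ((g * a * a⁻¹ * a' : G) : G ⧸ B.right.pt) = ((g * a' : G) : G ⧸ B.right.pt)
  rw [show g * a * a⁻¹ * a' = g * a' by group]

variable (𝓐 H) in
/-- The comparison functor to the poset. -/
def toPoset (h𝓐conj : ∀ K ∈ 𝓐, ∀ g : G, K.map (MulAut.conj g).toMonoidHom ∈ 𝓐) :
    UnderCat 𝓐 H ⥤ {K : Subgroup G // K ∈ 𝓐 ∧ H ≤ K} where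
  obj A := ⟨stabObj A, stabObj_mem h𝓐conj A, le_stabObj A⟩
  map {A B} u := homOfLE (by
    intro x hx
    have hw := w_apply u ((1 : G) : G ⧸ H)
    have hx' : x • A.hom.1 ((1 : G) : G ⧸ H) = A.hom.1 ((1 : G) : G ⧸ H) := hx
    show x • B.hom.1 ((1 : G) : G ⧸ H) = B.hom.1 ((1 : G) : G ⧸ H)
    rw [← hw]; exact (u.right.2 x _).symm.trans (congrArg u.right.1 hx'))
  map_id _ := rfl
  map_comp _ _ := rfl

lemma stabObj_projObj {K : Subgroup G} (h₁ : K ∈ 𝓐) (h₂ : H ≤ K) :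
    stabObj (projObj G 𝓐 H h₁ h₂) = K := by
  have h : (projObj G 𝓐 H h₁ h₂).hom.1 ((1 : G) : G ⧸ H) = ((1 : G) : G ⧸ K) := rfl
  rw [stabObj, h]
  exact MulAction.stabilizer_quotient _

end Aux

/-- **Structural claim in the proof of Proposition `furthercofinalcollection`
(Section 5.5).**  Let `G` be a finite group and `𝓐` a collection of subgroups of
`G` closed under conjugation and under pairwise intersection, and let `H ≤ G` be
contained in at least one member of `𝓐`.  Then the under category of `O_𝓐(G)`
under `G/H` is equivalent, as a category, to the poset `P = {K ∈ 𝓐 | H ≤ K}`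
(ordered by inclusion): every hom-set of the under category has at most one
element, every object is isomorphic to a canonical projection `G/H → G/K` with
`K ∈ P`, and there is a morphism from the projection `G/H → G/K` to the
projection `G/H → G/K'` if and only if `K ⊆ K'`. -/


theorem underCategory_equiv_poset {G : Type u} [Group G] [Finite G]
    (𝓐 : Set (Subgroup G))
    (h𝓐conj : ∀ K ∈ 𝓐, ∀ g : G, K.map (MulAut.conj g).toMonoidHom ∈ 𝓐)
    (h𝓐inf : ∀ K ∈ 𝓐, ∀ K' ∈ 𝓐, K ⊓ K' ∈ 𝓐)
    (H : Subgroup G) (hH : ∃ K ∈ 𝓐, H ≤ K) :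
    Nonempty
        (StructuredArrow (⟨H, Set.mem_univ H⟩ : OrbitCat G Set.univ)
            (orbitIncl G (Set.subset_univ 𝓐)) ≌
          {K : Subgroup G // K ∈ 𝓐 ∧ H ≤ K}) ∧
    (∀ A B : StructuredArrow (⟨H, Set.mem_univ H⟩ : OrbitCat G Set.univ)
        (orbitIncl G (Set.subset_univ 𝓐)), Subsingleton (A ⟶ B)) ∧
    (∀ A : StructuredArrow (⟨H, Set.mem_univ H⟩ : OrbitCat G Set.univ)
        (orbitIncl G (Set.subset_univ 𝓐)),
      ∃ (K : Subgroup G) (h₁ : K ∈ 𝓐) (h₂ : H ≤ K),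
        Nonempty (A ≅ projObj G 𝓐 H h₁ h₂)) ∧
    (∀ (K K' : Subgroup G) (h₁ : K ∈ 𝓐) (h₁' : K' ∈ 𝓐) (h₂ : H ≤ K) (h₂' : H ≤ K'),
      Nonempty (projObj G 𝓐 H h₁ h₂ ⟶ projObj G 𝓐 H h₁' h₂') ↔ K ≤ K') := by
  classical
  let F := toPoset 𝓐 H h𝓐conj
  haveI : F.Faithful := ⟨fun _ => Subsingleton.elim _ _⟩
  haveI : F.Full := ⟨fun {A B} u => ⟨fullHom A B (leOfHom u), Subsingleton.elim _ _⟩⟩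
  haveI : F.EssSurj :=
    ⟨fun K => ⟨projObj G 𝓐 H K.2.1 K.2.2,
      ⟨eqToIso (Subtype.ext (stabObj_projObj K.2.1 K.2.2))⟩⟩⟩
  haveI : F.IsEquivalence := {}
  refine ⟨⟨F.asEquivalence⟩, underHom_subsingleton, ?_, ?_⟩
  · intro A
    refine ⟨stabObj A, stabObj_mem h𝓐conj A, le_stabObj A, ⟨?_⟩⟩
    refine F.preimageIso (eqToIso (Subtype.ext ?_))
    exact (stabObj_projObj (stabObj_mem h𝓐conj A) (le_stabObj A)).symm
  · intro K K' h₁ h₁' h₂ h₂'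
    constructor
    · rintro ⟨u⟩
      have h : stabObj (projObj G 𝓐 H h₁ h₂) ≤ stabObj (projObj G 𝓐 H h₁' h₂') :=
        leOfHom (F.map u)
      rwa [stabObj_projObj, stabObj_projObj] at h
    · intro hle
      exact ⟨fullHom _ _ (by rw [stabObj_projObj, stabObj_projObj]; exact hle)⟩
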